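/- arXiv:2302.02072 — 2 statements merged into one kernel-verified Lean document; each statement's English description precedes it below -/
import Mathlib

section
/- Strong duality: assume (H0)–(H2), (A0), (A1), and that the augmenting function σ is conditionally coercive with σ(0)=0 and argmin σ = {0}. If there exists (ȳ,c̄) ∈ H × ℝ₊ with q(ȳ,c̄) > −∞, then the zero-duality-gap property holds: M_P = M_D, where M_P := inf_{x∈X} φ(x) and M_D := sup_{(y,c)∈H×ℝ₊} q(y,c). -/
open Filter Topology Bornology

noncomputable section

/-- A real normed space is *reflexive* if the canonical embedding into its double dual is
surjective. -/
def IsReflexiveSpace (X : Type*) [NormedAddCommGroup X] [NormedSpace ℝ X] : Prop :=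
  Function.Surjective ⇑(NormedSpace.inclusionInDoubleDual ℝ X)

/-- A set is *weakly compact* if it is compact in the weak topology. -/
def WCompact {X : Type*} [NormedAddCommGroup X] [NormedSpace ℝ X] (S : Set X) : Prop :=
  IsCompact (show Set (WeakSpace ℝ X) from S)

/-- A set is *weakly open* if it is open in the weak topology. -/
def WOpen {X : Type*} [NormedAddCommGroup X] [NormedSpace ℝ X] (S : Set X) : Prop :=
  IsOpen (show Set (WeakSpace ℝ X) from S)

/-- A set of pairs is *weakly compact* if it is compact in the product of the weak
topologies. -/
def WCompact2 {X H : Type*} [NormedAddCommGroup X] [NormedSpace ℝ X]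
    [NormedAddCommGroup H] [NormedSpace ℝ H] (S : Set (X × H)) : Prop :=
  IsCompact (show Set (WeakSpace ℝ X × WeakSpace ℝ H) from S)

/-- *Weak lower semicontinuity* of an extended-real-valued function. -/
def WLsc {X : Type*} [NormedAddCommGroup X] [NormedSpace ℝ X] (g : X → EReal) : Prop :=
  LowerSemicontinuous (show WeakSpace ℝ X → EReal from g)

/-- Weak lower semicontinuity of a function of two variables, w.r.t. the product of the
weak topologies. -/
def WLsc2 {X H : Type*} [NormedAddCommGroup X] [NormedSpace ℝ X]
    [NormedAddCommGroup H] [NormedSpace ℝ H] (g : X × H → EReal) : Prop :=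
  LowerSemicontinuous (show WeakSpace ℝ X × WeakSpace ℝ H → EReal from g)

/-- Weak upper semicontinuity of a real-valued function. -/
def WUsc {X : Type*} [NormedAddCommGroup X] [NormedSpace ℝ X] (g : X → ℝ) : Prop :=
  UpperSemicontinuous (show WeakSpace ℝ X → ℝ from g)

/-- Weak (sequential) convergence of a sequence: `L (u n) → L l` for every continuous
linear functional `L`. -/
def WSeqConv {X : Type*} [NormedAddCommGroup X] [NormedSpace ℝ X] (u : ℕ → X) (l : X) : Prop :=
  ∀ L : StrongDual ℝ X, Tendsto (fun n => L (u n)) atTop (𝓝 (L l))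

/-- Weak level-compactness of a dualizing parameterization `f`. -/
def WLevelCompact {X H : Type*} [NormedAddCommGroup X] [NormedSpace ℝ X]
    [NormedAddCommGroup H] [NormedSpace ℝ H] (f : X → H → EReal) : Prop :=
  ∀ (z₀ : H) (α : ℝ), ∃ U : Set H, WOpen U ∧ z₀ ∈ U ∧
    ∃ B : Set X, WCompact B ∧ ∀ z ∈ U, {x : X | f x z ≤ (α : EReal)} ⊆ B

section Lagrangian

variable {X H : Type*} [NormedAddCommGroup H] [InnerProductSpace ℝ H]

/-- The augmented Lagrangian integrand `(x,z) ↦ f(x,z) − ⟨A z, y⟩ + c σ(z)`. -/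
def lagr (f : X → H → EReal) (σ : H → EReal) (A : H → H) (y : H) (c : ℝ) (x : X) (z : H) :
    EReal :=
  f x z - ((inner ℝ (A z) y : ℝ) : EReal) + (c : EReal) * σ z

/-- The dual function `q(y,c) = inf_{x,z} (f(x,z) − ⟨A z, y⟩ + c σ(z))`. -/
def dualq (f : X → H → EReal) (σ : H → EReal) (A : H → H) (y : H) (c : ℝ) : EReal :=
  ⨅ (x : X) (z : H), lagr f σ A y c x z

/-- The dual optimal value `M_D = sup_{(y,c) ∈ H × ℝ₊} q(y,c)`. -/
def MD (f : X → H → EReal) (σ : H → EReal) (A : H → H) : EReal :=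
  ⨆ (y : H) (c : ℝ) (_ : 0 ≤ c), dualq f σ A y c

/-- `(y,c)` is a solution of the dual problem. -/
def DualSol (f : X → H → EReal) (σ : H → EReal) (A : H → H) (y : H) (c : ℝ) : Prop :=
  0 ≤ c ∧ ∀ (y' : H) (c' : ℝ), 0 ≤ c' → dualq f σ A y' c' ≤ dualq f σ A y c

/-- The function `γ_n(z) = β(z) − ⟨A z, ȳ⟩ + n σ(z)`, where `β(z) = inf_x f(x,z)`. -/
def gam (f : X → H → EReal) (σ : H → EReal) (A : H → H) (ybar : H) (n : ℕ) (z : H) : EReal :=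
  (⨅ x : X, f x z) - ((inner ℝ (A z) ybar : ℝ) : EReal) + (n : EReal) * σ z

end Lagrangian

/-- The primal optimal value `M_P = inf_x φ(x)`. -/
def MP {X : Type*} (φ : X → EReal) : EReal := ⨅ x, φ x

set_option maxHeartbeats 1000000

/-! ### Auxiliary lemmas -/

lemma hilbert_ball_wcompact {H : Type*} [NormedAddCommGroup H] [InnerProductSpace ℝ H]
    [CompleteSpace H] (R : ℝ) {C : Set H} (hC : C = Metric.closedBall (0:H) R) :
    IsCompact (show Set (WeakSpace ℝ H) from C) := by
  subst hC
  set T := InnerProductSpace.toDual ℝ H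
  have hcomp : IsCompact
      (WeakDual.toStrongDual ⁻¹' Metric.closedBall (0 : StrongDual ℝ H) R) :=
    WeakDual.isCompact_closedBall (0 : StrongDual ℝ H) R
  set ψ : WeakDual ℝ H → WeakSpace ℝ H := fun g => toWeakSpace ℝ H (T.symm g) with hψ
  have hcont : Continuous ψ := by
    apply WeakBilin.continuous_of_continuous_eval
    intro L
    have : (fun g : WeakDual ℝ H => (topDualPairing ℝ H).flip (ψ g) L)
        = fun g : WeakDual ℝ H => g (T.symm L) := by
      funext g
      show L (T.symm g) = g (T.symm L)
      have h1 : L (T.symm g) = (T (T.symm L)) (T.symm g) := by simp [T]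
      rw [h1, InnerProductSpace.toDual_apply_apply, real_inner_comm]
      exact InnerProductSpace.toDual_symm_apply
    rw [this]
    exact WeakDual.eval_continuous _
  have himg : ψ '' (WeakDual.toStrongDual ⁻¹' Metric.closedBall (0 : StrongDual ℝ H) R)
      = (show Set (WeakSpace ℝ H) from (Metric.closedBall (0:H) R : Set H)) := by
    ext z
    constructor
    · rintro ⟨g, hg, rfl⟩
      simp only [Set.mem_preimage, mem_closedBall_zero_iff] at hg
      show (T.symm g : H) ∈ Metric.closedBall (0:H) R
      rw [mem_closedBall_zero_iff]
      exact (T.symm.norm_map _).trans_le hg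
    · intro hz
      have hz' : ‖((toWeakSpace ℝ H).symm z : H)‖ ≤ R := by
        have h2 : ((toWeakSpace ℝ H).symm z : H) ∈ Metric.closedBall (0:H) R := hz
        rwa [mem_closedBall_zero_iff] at h2
      refine ⟨T (toWeakSpace ℝ H |>.symm z), ?_, ?_⟩
      · show T _ ∈ Metric.closedBall (0 : StrongDual ℝ H) R
        rw [mem_closedBall_zero_iff]
        simpa using hz'
      · simp [ψ]
  rw [← himg]
  exact hcomp.image hcont

lemma ereal_sub_coe_ne_bot {w : EReal} (hw : w ≠ ⊥) (a : ℝ) : w - (a : EReal) ≠ ⊥ := by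
  induction w using EReal.rec with
  | bot => exact absurd rfl hw
  | coe t => rw [← EReal.coe_sub]; exact EReal.coe_ne_bot _
  | top => rw [EReal.top_sub_coe]; exact top_ne_bot

lemma lagr_coe {X H : Type*} [NormedAddCommGroup H] [InnerProductSpace ℝ H]
    (f : X → H → EReal) (σ : H → EReal) (A : H → H) (y : H) (c : ℝ) (x : X) (z : H)
    {F s : ℝ} (hF : f x z = (F : EReal)) (hs : σ z = (s : EReal)) :
    lagr f σ A y c x z = ((F - (inner ℝ (A z) y : ℝ) + c * s : ℝ) : EReal) := by
  rw [lagr, hF, hs, ← EReal.coe_mul, ← EReal.coe_sub, ← EReal.coe_add]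

lemma extract_real {X H : Type*} [NormedAddCommGroup H] [InnerProductSpace ℝ H]
    (f : X → H → EReal) (σ : H → EReal) (A : H → H) (y : H) {c : ℝ} (hc : 0 < c)
    {x : X} {z : H} (hfb : f x z ≠ ⊥) (hσp : (0 : EReal) ≤ σ z) {r : ℝ}
    (hlt : lagr f σ A y c x z < (r : EReal)) :
    ∃ F s : ℝ, f x z = (F : EReal) ∧ σ z = (s : EReal) ∧
      F - (inner ℝ (A z) y : ℝ) + c * s < r := by
  have hσb : σ z ≠ ⊥ := (lt_of_lt_of_le EReal.bot_lt_zero hσp).ne'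
  have hfτ : f x z ≠ ⊤ := by
    intro hft
    rw [lagr, hft, EReal.top_sub_coe] at hlt
    have h0 : (0 : EReal) ≤ (c : EReal) * σ z :=
      mul_nonneg (by exact_mod_cast hc.le) hσp
    rw [EReal.top_add_of_ne_bot (lt_of_lt_of_le EReal.bot_lt_zero h0).ne'] at hlt
    exact absurd hlt not_top_lt
  have hστ : σ z ≠ ⊤ := by
    intro hσt
    rw [lagr, hσt, EReal.coe_mul_top_of_pos hc,
      EReal.add_top_of_ne_bot (ereal_sub_coe_ne_bot hfb _)] at hlt
    exact absurd hlt not_top_lt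
  refine ⟨(f x z).toReal, (σ z).toReal, (EReal.coe_toReal hfτ hfb).symm,
    (EReal.coe_toReal hστ hσb).symm, ?_⟩
  rw [lagr_coe f σ A y c x z (EReal.coe_toReal hfτ hfb).symm
    (EReal.coe_toReal hστ hσb).symm] at hlt
  exact_mod_cast hlt

/-- Strong duality: under (H0)–(H2), (A0), (A1), with a conditionally
coercive augmenting function and a point where the dual function is above `−∞`, the
zero-duality-gap property `M_P = M_D` holds. -/
theorem strong_duality
    {X H : Type*} [NormedAddCommGroup X] [NormedSpace ℝ X] [CompleteSpace X]
    [NormedAddCommGroup H] [InnerProductSpace ℝ H] [CompleteSpace H]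
    (hrefl : IsReflexiveSpace X)
    (φ : X → EReal)
    (hφproper : (∀ x, φ x ≠ ⊥) ∧ (∃ x, φ x ≠ ⊤))
    (hφwlsc : WLsc φ)
    (hφlev : ∀ α : ℝ, WCompact {x : X | φ x ≤ (α : EReal)})
    (f : X → H → EReal)
    (hdual : ∀ x, f x 0 = φ x)
    (hfproper : (∀ x z, f x z ≠ ⊥) ∧ (∃ x z, f x z ≠ ⊤))
    (hflsc : WLsc2 fun p : X × H => f p.1 p.2)
    (hflev : WLevelCompact f)
    (σ : H → EReal)
    (hσpos : ∀ z, 0 ≤ σ z)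
    (hσ0 : σ 0 = 0)
    (hσargmin : ∀ z, σ z = 0 → z = 0)
    (hσwlsc : WLsc σ)
    (A : H → H)
    (hA0 : ∀ z, (‖A z‖ : EReal) ≤ σ z)
    (hA1 : ∀ y : H, WUsc fun z => (inner ℝ (A z) y : ℝ))
    (Kσ : ℝ) (hKσpos : 0 < Kσ) (hσcc : IsBounded {z : H | σ z ≤ (Kσ : EReal)})
    (ybar : H) (cbar : ℝ) (hcbar : 0 ≤ cbar) (hqbar : dualq f σ A ybar cbar ≠ ⊥) :
    MP φ = MD f σ A := by
  classical
  -- A 0 = 0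
  have hA00 : A 0 = 0 := by
    have h1 := hA0 0
    rw [hσ0] at h1
    have h2 : ‖A 0‖ ≤ (0 : ℝ) := by exact_mod_cast h1
    simpa using norm_le_zero_iff.mp (h2.trans le_rfl)
  -- weak duality
  have hweak : MD f σ A ≤ MP φ := by
    rw [MD, MP]
    refine iSup_le fun y => iSup_le fun c => iSup_le fun hc => le_iInf fun x => ?_
    have h1 : dualq f σ A y c ≤ lagr f σ A y c x 0 := iInf₂_le x 0
    have h2 : lagr f σ A y c x 0 = φ x := by
      rw [lagr, hdual x, hA00, hσ0]
      simp
    rwa [h2] at h1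
  refine le_antisymm ?_ hweak
  by_contra hcon
  have hMDMP : MD f σ A < MP φ := not_le.mp hcon
  obtain ⟨r, hMDr, hrMP⟩ := EReal.exists_between_coe_real hMDMP
  have hqle : dualq f σ A ybar cbar ≤ MD f σ A :=
    le_iSup_of_le ybar (le_iSup_of_le cbar (le_iSup_of_le hcbar le_rfl))
  obtain ⟨m, _, hmq⟩ := EReal.exists_between_coe_real hqbar.bot_lt
  have hmr : m < r := by
    have h1 : (m : EReal) < (r : EReal) := lt_of_lt_of_le hmq (hqle.trans hMDr.le)
    exact_mod_cast h1
  -- choose minimizing sequences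
  have hex : ∀ n : ℕ, ∃ x z, lagr f σ A ybar ((n : ℝ) + 1) x z < (r : EReal) := by
    intro n
    have h1 : dualq f σ A ybar ((n : ℝ) + 1) ≤ MD f σ A :=
      le_iSup_of_le ybar (le_iSup_of_le ((n : ℝ) + 1) (le_iSup_of_le (by positivity) le_rfl))
    have h2 : dualq f σ A ybar ((n : ℝ) + 1) < (r : EReal) := lt_of_le_of_lt h1 hMDr
    rw [dualq] at h2
    obtain ⟨x, hx⟩ := iInf_lt_iff.mp h2
    obtain ⟨z, hz⟩ := iInf_lt_iff.mp hx
    exact ⟨x, z, hz⟩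
  choose xs zs hxz using hex
  have hkey : ∀ n : ℕ, ∃ F s : ℝ, f (xs n) (zs n) = (F : EReal) ∧ σ (zs n) = (s : EReal) ∧
      F - (inner ℝ (A (zs n)) ybar : ℝ) + ((n : ℝ) + 1) * s < r := by
    intro n
    exact extract_real f σ A ybar (by positivity) (hfproper.1 _ _) (hσpos _) (hxz n)
  choose Fs ss hF hs hr using hkey
  have hs0 : ∀ n, 0 ≤ ss n := by
    intro n
    have h1 := hσpos (zs n)
    rw [hs n] at h1
    exact_mod_cast h1
  have hAn : ∀ n, ‖A (zs n)‖ ≤ ss n := by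
    intro n
    have h1 := hA0 (zs n)
    rw [hs n] at h1
    exact_mod_cast h1
  have hm : ∀ n, m < Fs n - (inner ℝ (A (zs n)) ybar : ℝ) + cbar * ss n := by
    intro n
    have h1 : (m : EReal) < lagr f σ A ybar cbar (xs n) (zs n) :=
      lt_of_lt_of_le hmq (iInf₂_le _ _)
    rw [lagr_coe f σ A ybar cbar _ _ (hF n) (hs n)] at h1
    exact_mod_cast h1
  -- sigma values tend to zero
  have hsmall : ∀ ε : ℝ, 0 < ε → ∀ᶠ n in atTop, ss n < ε := by
    intro ε hε
    have hrm : 0 < r - m := by linarith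
    filter_upwards [eventually_ge_atTop ⌈cbar + (r - m) / ε⌉₊] with n hn
    have h1 : cbar + (r - m) / ε ≤ (n : ℝ) := (Nat.le_ceil _).trans (by exact_mod_cast hn)
    have h2 : (r - m) / ε ≤ (n : ℝ) + 1 - cbar := by linarith
    have h3 : 0 < (n : ℝ) + 1 - cbar := lt_of_lt_of_le (div_pos hrm hε) h2
    have h4 : ss n * ((n : ℝ) + 1 - cbar) < r - m := by nlinarith [hr n, hm n]
    have h5 : r - m ≤ ε * ((n : ℝ) + 1 - cbar) := by
      rw [div_le_iff₀ hε] at h2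
      nlinarith
    nlinarith [hs0 n]
  -- boundedness of the z-sequence
  obtain ⟨R, hRb⟩ := isBounded_iff_forall_norm_le.mp hσcc
  have hzK : ∀ᶠ n in atTop, zs n ∈ Metric.closedBall (0 : H) R := by
    filter_upwards [hsmall Kσ hKσpos] with n hn
    have h1 : σ (zs n) ≤ (Kσ : EReal) := by rw [hs n]; exact_mod_cast hn.le
    rw [mem_closedBall_zero_iff]
    exact hRb _ h1
  -- weak convergence of the z-sequence to 0
  have hballC : IsCompact (show Set (WeakSpace ℝ H) from (Metric.closedBall (0 : H) R : Set H)) :=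
    hilbert_ball_wcompact R rfl
  have hζ : Tendsto (fun n => (show WeakSpace ℝ H from zs n)) atTop
      (𝓝 (show WeakSpace ℝ H from (0 : H))) := by
    rw [tendsto_iff_ultrafilter]
    intro U hU
    set V : Ultrafilter (WeakSpace ℝ H) := U.map (fun n => (show WeakSpace ℝ H from zs n))
      with hVdef
    have hVle : (V : Filter (WeakSpace ℝ H)) ≤
        map (fun n => (show WeakSpace ℝ H from zs n)) atTop := by
      rw [hVdef, Ultrafilter.coe_map]
      exact Filter.map_mono hU
    have hK : (show Set (WeakSpace ℝ H) from (Metric.closedBall (0 : H) R : Set H)) ∈ V :=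
      hVle hzK
    obtain ⟨zstar, _, hzle⟩ := hballC.ultrafilter_le_nhds' V hK
    have hz0 : zstar = (show WeakSpace ℝ H from (0 : H)) := by
      have hσz : ∀ ε : ℝ, 0 < ε → σ zstar ≤ (ε : EReal) := by
        intro ε hε
        have hCc : IsClosed ((show WeakSpace ℝ H → EReal from σ) ⁻¹' Set.Iic (ε : EReal)) :=
          hσwlsc.isClosed_preimage _
        have hCm : (show WeakSpace ℝ H → EReal from σ) ⁻¹' Set.Iic (ε : EReal) ∈ V := by
          apply hVle
          rw [Filter.mem_map]
          filter_upwards [hsmall ε hε] with n hn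
          show σ (zs n) ≤ (ε : EReal)
          rw [hs n]
          exact_mod_cast hn.le
        have h2 := mem_closure_iff_ultrafilter.mpr ⟨V, hCm, hzle⟩
        rwa [hCc.closure_eq] at h2
      have hle0 : σ zstar ≤ 0 := by
        by_contra hgt
        obtain ⟨ε, hε0, hεσ⟩ := EReal.exists_between_coe_real (not_le.mp hgt)
        have hε0' : (0 : ℝ) < ε := by exact_mod_cast hε0
        exact absurd (hσz ε hε0') (not_le.mpr hεσ)
      exact hσargmin _ (le_antisymm hle0 (hσpos _))
    show (V : Filter (WeakSpace ℝ H)) ≤ _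
    rw [← hz0]
    exact hzle
  -- upper bound on f along the sequence
  have hFb : ∀ n, Fs n ≤ r + ss n * ‖ybar‖ := by
    intro n
    have h1 := hr n
    have h2 : (0 : ℝ) ≤ ((n : ℝ) + 1) * ss n := mul_nonneg (by positivity) (hs0 n)
    have h3 : (inner ℝ (A (zs n)) ybar : ℝ) ≤ ‖A (zs n)‖ * ‖ybar‖ := real_inner_le_norm _ _
    have h4 : ‖A (zs n)‖ * ‖ybar‖ ≤ ss n * ‖ybar‖ :=
      mul_le_mul_of_nonneg_right (hAn n) (norm_nonneg _)
    linarith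
  -- eventually the x-sequence lies in a weakly compact set
  obtain ⟨Unb, hUopen, hU0, B, hBcomp, hBsub⟩ := hflev 0 (r + ‖ybar‖)
  have hxB : ∀ᶠ n in atTop, xs n ∈ B := by
    have hUnb : (show Set (WeakSpace ℝ H) from Unb) ∈ 𝓝 (show WeakSpace ℝ H from (0 : H)) :=
      hUopen.mem_nhds hU0
    filter_upwards [hζ hUnb, hsmall 1 one_pos] with n hn1 hn2
    refine hBsub (zs n) hn1 ?_
    show f (xs n) (zs n) ≤ ((r + ‖ybar‖ : ℝ) : EReal)
    rw [hF n]
    have h5 : ss n * ‖ybar‖ ≤ 1 * ‖ybar‖ := mul_le_mul_of_nonneg_right hn2.le (norm_nonneg _)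
    have h6 : Fs n ≤ r + ‖ybar‖ := by
      have := hFb n
      linarith
    exact_mod_cast h6
  -- ultrafilter construction
  set w : ℕ → WeakSpace ℝ X × WeakSpace ℝ H :=
    fun n => (show WeakSpace ℝ X from xs n, show WeakSpace ℝ H from zs n) with hw
  have hwNe : (map w atTop).NeBot := map_neBot
  set U := @Ultrafilter.of _ (map w atTop) hwNe with hUdef
  have hUle : (U : Filter (WeakSpace ℝ X × WeakSpace ℝ H)) ≤ map w atTop := Ultrafilter.of_le _
  have hfstB : (show Set (WeakSpace ℝ X) from B) ∈ U.map Prod.fst := by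
    rw [Ultrafilter.mem_map, ← Ultrafilter.mem_coe]
    apply hUle
    have h1 : ∀ᶠ n in atTop, (w n).1 ∈ (show Set (WeakSpace ℝ X) from B) := hxB
    exact h1
  obtain ⟨xstar, _, hxstarle⟩ := hBcomp.ultrafilter_le_nhds' (U.map Prod.fst) hfstB
  have hfstle : Filter.map Prod.fst (U : Filter (WeakSpace ℝ X × WeakSpace ℝ H)) ≤ 𝓝 xstar := by
    have h1 : (↑(U.map Prod.fst) : Filter (WeakSpace ℝ X)) ≤ 𝓝 xstar := hxstarle
    rwa [Ultrafilter.coe_map] at h1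
  have hsndle : Filter.map Prod.snd (U : Filter (WeakSpace ℝ X × WeakSpace ℝ H)) ≤
      𝓝 (show WeakSpace ℝ H from (0 : H)) := by
    calc Filter.map Prod.snd (U : Filter (WeakSpace ℝ X × WeakSpace ℝ H))
        ≤ Filter.map Prod.snd (map w atTop) := Filter.map_mono hUle
      _ = map (fun n => (w n).2) atTop := by rw [Filter.map_map]; rfl
      _ ≤ 𝓝 (show WeakSpace ℝ H from (0 : H)) := hζ
  have hUprod : (U : Filter (WeakSpace ℝ X × WeakSpace ℝ H)) ≤ 𝓝 (xstar, (show WeakSpace ℝ H from (0 : H))) := by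
    rw [nhds_prod_eq]
    calc (U : Filter (WeakSpace ℝ X × WeakSpace ℝ H))
        ≤ Filter.map Prod.fst (U : Filter (WeakSpace ℝ X × WeakSpace ℝ H)) ×ˢ
          Filter.map Prod.snd (U : Filter (WeakSpace ℝ X × WeakSpace ℝ H)) :=
          Filter.le_prod_map_fst_snd
      _ ≤ 𝓝 xstar ×ˢ 𝓝 (show WeakSpace ℝ H from (0 : H)) := Filter.prod_mono hfstle hsndle
  -- conclude φ xstar ≤ r + ε for all ε > 0
  have hφr : ∀ ε : ℝ, 0 < ε → φ (show X from xstar) ≤ ((r + ε : ℝ) : EReal) := by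
    intro ε hε
    have hCc : IsClosed ((show WeakSpace ℝ X × WeakSpace ℝ H → EReal from
        fun p : X × H => f p.1 p.2) ⁻¹' Set.Iic ((r + ε : ℝ) : EReal)) :=
      hflsc.isClosed_preimage _
    have hCm : (show WeakSpace ℝ X × WeakSpace ℝ H → EReal from
        fun p : X × H => f p.1 p.2) ⁻¹' Set.Iic ((r + ε : ℝ) : EReal) ∈ (U : Filter (WeakSpace ℝ X × WeakSpace ℝ H)) := by
      apply hUle
      rw [Filter.mem_map]
      have hev : ∀ᶠ n in atTop, f (xs n) (zs n) ≤ ((r + ε : ℝ) : EReal) := by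
        filter_upwards [hsmall (ε / (‖ybar‖ + 1)) (by positivity)] with n hn
        rw [hF n]
        have h2 : ss n * ‖ybar‖ ≤ (ε / (‖ybar‖ + 1)) * ‖ybar‖ :=
          mul_le_mul_of_nonneg_right hn.le (norm_nonneg _)
        have h3 : (ε / (‖ybar‖ + 1)) * ‖ybar‖ ≤ ε := by
          rw [div_mul_eq_mul_div, div_le_iff₀ (by positivity)]
          nlinarith [norm_nonneg ybar]
        have h4 : Fs n ≤ r + ε := by
          have := hFb n
          linarith
        exact_mod_cast h4
      exact hev
    have hmem := mem_closure_iff_ultrafilter.mpr ⟨U, hCm, hUprod⟩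
    rw [hCc.closure_eq] at hmem
    have hmem' : f (show X from xstar) (0 : H) ≤ ((r + ε : ℝ) : EReal) := hmem
    rwa [hdual] at hmem'
  -- final contradiction
  have hfinal : MP φ ≤ (r : EReal) := by
    have h1 : MP φ ≤ φ (show X from xstar) := iInf_le _ _
    by_contra hgt
    obtain ⟨t, hrt, htMP⟩ := EReal.exists_between_coe_real (not_le.mp hgt)
    have hrt' : r < t := by exact_mod_cast hrt
    have h2 := hφr (t - r) (by linarith)
    have h3 : r + (t - r) = t := by ring
    rw [h3] at h2
    exact absurd htMP (not_lt.mpr (h1.trans h2))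
  exact absurd hrMP (not_lt.mpr hfinal)
end
end

section
/- Assume (H0)–(H2), (A0), (A1), strong duality M_P = M_D, and that σ is conditionally coercive with constant K_σ. Let (ŷ,ĉ) satisfy q(ŷ,ĉ) > −∞ and s ≥ M_P. If the exact DSG algorithm (r_k = 0 for all k) is started at y₀ := ŷ and c₀ > ĉ + (s − q(ŷ,ĉ))/K_σ, then for every k ≥ 0 the set X(y_k,c_k) := {(x,z) ∈ X × H : f(x,z) − ⟨A(z),y_k⟩ + c_k σ(z) = q(y_k,c_k)} is nonempty; that is, the exact DSG algorithm is well defined and q(y_k,c_k) ∈ ℝ is attained at each iteration. -/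
open Filter Topology Bornology

noncomputable section

section DSGAux

/-- A lower semicontinuous `EReal`-valued function attains its minimum on a nonempty
compact set. -/
theorem DSG.lsc_exists_min {α : Type*} [TopologicalSpace α] {K : Set α} (hK : IsCompact K)
    (hne : K.Nonempty) {g : α → EReal} (hg : LowerSemicontinuous g) :
    ∃ p ∈ K, ∀ q ∈ K, g p ≤ g q := by
  by_contra h
  push_neg at h
  have hcov : K ⊆ ⋃ q : K, g ⁻¹' Set.Ioi (g q) := by
    intro p hp
    obtain ⟨q, hqK, hlt⟩ := h p hp
    exact Set.mem_iUnion.2 ⟨⟨q, hqK⟩, hlt⟩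
  obtain ⟨t, ht⟩ := hK.elim_finite_subcover (fun q : K => g ⁻¹' Set.Ioi (g q))
    (fun q => hg.isOpen_preimage _) hcov
  obtain ⟨p₀, hp₀⟩ := hne
  obtain ⟨i, hit, -⟩ := Set.mem_iUnion₂.1 (ht hp₀)
  obtain ⟨q₀, hq₀t, hq₀min⟩ := t.exists_min_image (fun q => g q.1) ⟨i, hit⟩
  obtain ⟨j, hjt, hjlt⟩ := Set.mem_iUnion₂.1 (ht q₀.2)
  exact absurd (hq₀min j hjt) (not_le.2 hjlt)

/-- Multiplying a lower semicontinuous `EReal`-valued function by a nonnegative real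
constant preserves lower semicontinuity. -/
theorem DSG.lsc_const_mul {α : Type*} [TopologicalSpace α] {g : α → EReal}
    (hg : LowerSemicontinuous g) {c : ℝ} (hc : 0 ≤ c) :
    LowerSemicontinuous fun x => (c : EReal) * g x := by
  rcases eq_or_lt_of_le hc with h0 | hpos
  · have : (fun x => (c : EReal) * g x) = fun _ => (0 : EReal) := by
      funext x; rw [← h0]; simp
    rw [this]; exact lowerSemicontinuous_const
  · have hc0 : (0 : EReal) < (c : EReal) := by exact_mod_cast hpos
    have hct : (c : EReal) ≠ ⊤ := EReal.coe_ne_top c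
    rw [lowerSemicontinuous_iff_isOpen_preimage]
    intro y
    have : (fun x => (c : EReal) * g x) ⁻¹' Set.Ioi y = g ⁻¹' Set.Ioi (y / (c : EReal)) := by
      ext x
      simp only [Set.mem_preimage, Set.mem_Ioi]
      rw [← not_le, ← not_le, EReal.le_div_iff_mul_le hc0 hct, mul_comm]
    rw [this]
    exact hg.isOpen_preimage _

/-- Closed balls of a real Hilbert space are weakly compact. -/
theorem DSG.wCompact_closedBall (H : Type*) [NormedAddCommGroup H] [InnerProductSpace ℝ H]
    [CompleteSpace H] (r : ℝ) :
    WCompact (Metric.closedBall (0 : H) r) := by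
  set D := InnerProductSpace.toDual ℝ H with hD
  set g : WeakDual ℝ H → WeakSpace ℝ H := fun φ => D.symm (WeakDual.toStrongDual φ) with hg
  have hgc : Continuous g := by
    apply WeakBilin.continuous_of_continuous_eval
    intro L
    have : (fun φ : WeakDual ℝ H => (topDualPairing ℝ H).flip (g φ) L)
        = fun φ : WeakDual ℝ H => φ (D.symm L) := by
      funext φ
      have h1 : (topDualPairing ℝ H).flip (g φ) L
          = L (D.symm (WeakDual.toStrongDual φ)) := rfl
      rw [h1]
      have h2 : L (D.symm (WeakDual.toStrongDual φ)) =
          (D (D.symm L)) (D.symm (WeakDual.toStrongDual φ)) := by rw [D.apply_symm_apply]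
      rw [h2, InnerProductSpace.toDual_apply_apply, real_inner_comm,
        InnerProductSpace.toDual_symm_apply]
      rfl
    rw [this]
    exact WeakDual.eval_continuous _
  have key : (Metric.closedBall (0 : H) r : Set H)
      = g '' (WeakDual.toStrongDual ⁻¹' Metric.closedBall 0 r) := by
    ext x
    constructor
    · intro hx
      rw [Metric.mem_closedBall, dist_zero_right] at hx
      refine ⟨WeakDual.toStrongDual.symm (D x), ?_, ?_⟩
      · rw [Set.mem_preimage, Metric.mem_closedBall, dist_zero_right]
        show ‖WeakDual.toStrongDual (WeakDual.toStrongDual.symm (D x))‖ ≤ r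
        rw [LinearEquiv.apply_symm_apply, D.norm_map]
        exact hx
      · show D.symm (WeakDual.toStrongDual (WeakDual.toStrongDual.symm (D x))) = _
        rw [LinearEquiv.apply_symm_apply, D.symm_apply_apply]
    · rintro ⟨φ, hφ, rfl⟩
      rw [Set.mem_preimage, Metric.mem_closedBall, dist_zero_right] at hφ
      show D.symm (WeakDual.toStrongDual φ) ∈ Metric.closedBall (0 : H) r
      rw [Metric.mem_closedBall, dist_zero_right, D.symm.norm_map]
      exact hφ
  unfold WCompact
  rw [key]
  exact (WeakDual.isCompact_closedBall (0 : StrongDual ℝ H) r).image hgc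

/-- A closed convex set is weakly closed. -/
theorem DSG.wClosed_of_convex_closed {H : Type*} [NormedAddCommGroup H] [NormedSpace ℝ H]
    {s : Set H} (hconv : Convex ℝ s) (hcl : IsClosed s) :
    IsClosed (show Set (WeakSpace ℝ H) from s) := by
  have h := hconv.toWeakSpace_closure (𝕜 := ℝ)
  rw [hcl.closure_eq] at h
  have himg : toWeakSpace ℝ H '' s = (show Set (WeakSpace ℝ H) from s) := by
    ext x
    constructor
    · rintro ⟨y, hy, rfl⟩; exact hy
    · intro hx; exact ⟨x, hx, rfl⟩
  rw [himg] at h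
  rw [← closure_eq_iff_isClosed]
  exact h.symm

end DSGAux

section DSGAux2
variable {X H : Type*} [NormedAddCommGroup H] [InnerProductSpace ℝ H]

theorem DSG.dualq_le_lagr (f : X → H → EReal) (σ : H → EReal) (A : H → H) (y : H) (c : ℝ)
    (x : X) (z : H) : dualq f σ A y c ≤ lagr f σ A y c x z := by
  unfold dualq
  exact iInf_le_of_le x (iInf_le_of_le z le_rfl)

theorem DSG.le_dualq (f : X → H → EReal) (σ : H → EReal) (A : H → H) (y : H) (c : ℝ)
    (b : EReal) (h : ∀ (x : X) (z : H), b ≤ lagr f σ A y c x z) : b ≤ dualq f σ A y c := by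
  unfold dualq
  exact le_iInf fun x => le_iInf fun z => h x z

end DSGAux2

/-- Well-definedness of the exact DSG algorithm for a conditionally
coercive `σ`: starting from `y₀ = ŷ` and `c₀ > ĉ + (s − q(ŷ,ĉ))/K_σ`, if the Lagrangian
infimum was attained at every previous iteration, then at the current iteration the value
`q(y_k,c_k)` is finite and the infimum defining it is attained. -/
theorem exact_dsg_well_defined
    {X H : Type*} [NormedAddCommGroup X] [NormedSpace ℝ X] [CompleteSpace X]
    [NormedAddCommGroup H] [InnerProductSpace ℝ H] [CompleteSpace H]
    (hrefl : IsReflexiveSpace X)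
    (φ : X → EReal)
    (hφproper : (∀ x, φ x ≠ ⊥) ∧ (∃ x, φ x ≠ ⊤))
    (hφwlsc : WLsc φ)
    (hφlev : ∀ α : ℝ, WCompact {x : X | φ x ≤ (α : EReal)})
    (f : X → H → EReal)
    (hdual : ∀ x, f x 0 = φ x)
    (hfproper : (∀ x z, f x z ≠ ⊥) ∧ (∃ x z, f x z ≠ ⊤))
    (hflsc : WLsc2 fun p : X × H => f p.1 p.2)
    (hflev : WLevelCompact f)
    (σ : H → EReal)
    (hσpos : ∀ z, 0 ≤ σ z)
    (hσ0 : σ 0 = 0)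
    (hσargmin : ∀ z, σ z = 0 → z = 0)
    (hσwlsc : WLsc σ)
    (A : H → H)
    (hA0 : ∀ z, (‖A z‖ : EReal) ≤ σ z)
    (hA1 : ∀ y : H, WUsc fun z => (inner ℝ (A z) y : ℝ))
    (Kσ : ℝ) (hKσpos : 0 < Kσ) (hσcc : IsBounded {z : H | σ z ≤ (Kσ : EReal)})
    (hSD : MP φ = MD f σ A)
    (yh : H) (ch : ℝ) (hch : 0 ≤ ch)
    (qh : ℝ) (hqh : dualq f σ A yh ch = (qh : EReal))
    (s : ℝ) (hs : MP φ ≤ (s : EReal))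
    (x : ℕ → X) (z y : ℕ → H) (c st a σz : ℕ → ℝ)
    (hσz : ∀ k, (σz k : EReal) = σ (z k))
    (abar : ℝ) (habar : 0 < abar) (ha : ∀ k, 0 < a k ∧ a k < abar)
    (hst : ∀ k, 0 < st k)
    (hy0 : y 0 = yh) (hc0 : ch + (s - qh) / Kσ < c 0)
    (hy : ∀ k, y (k + 1) = y k - st k • A (z k))
    (hc : ∀ k, c (k + 1) = c k + (a k + 1) * st k * σz k) :
    ∀ k : ℕ,
      (∀ j < k, lagr f σ A (y j) (c j) (x j) (z j) = dualq f σ A (y j) (c j)) →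
      (∃ qk : ℝ, dualq f σ A (y k) (c k) = (qk : EReal)) ∧
        ∃ (x' : X) (z' : H),
          lagr f σ A (y k) (c k) x' z' = dualq f σ A (y k) (c k) := by
  obtain ⟨hfbot, -⟩ := hfproper
  obtain ⟨hφbot, x₀, hx₀top⟩ := hφproper
  -- basic real facts about the iterates
  have hσzk : ∀ j, 0 ≤ σz j := by
    intro j
    have h := hσpos (z j); rw [← hσz j] at h; exact_mod_cast h
  have hAzk : ∀ j, ‖A (z j)‖ ≤ σz j := by
    intro j
    have h := hA0 (z j); rw [← hσz j] at h; exact_mod_cast h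
  -- the quantity `c k - ‖y k - yh‖` is nondecreasing along iterations
  have hB : ∀ j, c 0 ≤ c j - ‖y j - yh‖ := by
    intro j
    induction j with
    | zero => simp [hy0]
    | succ j ih =>
      have hnorm : ‖y (j + 1) - yh‖ ≤ ‖y j - yh‖ + st j * ‖A (z j)‖ := by
        rw [hy j]
        calc ‖y j - st j • A (z j) - yh‖ = ‖(y j - yh) - st j • A (z j)‖ := by
              rw [sub_right_comm]
          _ ≤ ‖y j - yh‖ + ‖st j • A (z j)‖ := norm_sub_le _ _
          _ = ‖y j - yh‖ + st j * ‖A (z j)‖ := by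
              rw [norm_smul, Real.norm_eq_abs, abs_of_pos (hst j)]
      rw [hc j]
      nlinarith [hσzk j, hAzk j, hst j, (ha j).1, mul_nonneg (hst j).le (hσzk j),
        mul_pos (mul_pos (ha j).1 (hst j)) (lt_of_le_of_lt (le_refl 0) (hst j)),
        mul_le_mul_of_nonneg_left (hAzk j) (hst j).le,
        mul_nonneg (mul_nonneg (ha j).1.le (hst j).le) (hσzk j)]
  -- `A 0 = 0`, so the Lagrangian at `z = 0` is `φ`
  have hA00 : A 0 = 0 := by
    have h := hA0 0
    rw [hσ0] at h
    have h' : (‖A 0‖ : EReal) ≤ ((0 : ℝ) : EReal) := by exact_mod_cast h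
    have h'' : ‖A (0 : H)‖ ≤ (0 : ℝ) := by exact_mod_cast h'
    exact norm_le_zero_iff.1 h''
  have hlagr0 : ∀ (y' : H) (c' : ℝ) (x' : X), lagr f σ A y' c' x' 0 = φ x' := by
    intro y' c' x'
    unfold lagr
    rw [hA00, hdual, hσ0]
    simp
  have hdualq_le : ∀ (y' : H) (c' : ℝ) (x' : X), dualq f σ A y' c' ≤ φ x' := by
    intro y' c' x'
    rw [← hlagr0 y' c' x']
    exact DSG.dualq_le_lagr f σ A y' c' x' 0
  -- a global minimizer of φ
  have hxs : ∃ xs : X, ∀ x'', φ xs ≤ φ x'' := by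
    set r₀ := (φ x₀).toReal with hr₀def
    have hr₀ : φ x₀ = (r₀ : EReal) := (EReal.coe_toReal hx₀top (hφbot x₀)).symm
    have hKc := hφlev r₀
    obtain ⟨xs, hxsK, hxsmin⟩ := DSG.lsc_exists_min hKc ⟨x₀, le_of_eq hr₀⟩ hφwlsc
    refine ⟨xs, fun x'' => ?_⟩
    by_cases h : φ x'' ≤ (r₀ : EReal)
    · exact hxsmin x'' h
    · exact le_trans (hxsmin x₀ (le_of_eq hr₀)) (le_trans (le_of_eq hr₀) (not_le.1 h).le)
  obtain ⟨xs, hxs⟩ := hxs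
  have hφxs_le_s : φ xs ≤ (s : EReal) := le_trans (le_iInf hxs) hs
  have hqhs : qh ≤ s := by
    have h1 : (qh : EReal) ≤ (s : EReal) := by
      rw [← hqh]; exact le_trans (hdualq_le yh ch xs) hφxs_le_s
    exact_mod_cast h1
  -- now fix the iteration k
  intro k _hprev
  set δ : ℝ := c k - ch - ‖y k - yh‖ with hδdef
  have hδgt : (s - qh) / Kσ < δ := by
    have := hB k
    have h0 : ch + (s - qh) / Kσ < c 0 := hc0
    simp only [hδdef]
    linarith
  have hKnn : 0 ≤ (s - qh) / Kσ := div_nonneg (by linarith) hKσpos.le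
  have hδpos : 0 < δ := lt_of_le_of_lt hKnn hδgt
  have hCpos : 0 < c k := by
    have := norm_nonneg (y k - yh)
    simp only [hδdef] at hδpos
    linarith
  have hqle : ∀ (x' : X) (z' : H), (qh : EReal) ≤ lagr f σ A yh ch x' z' := by
    intro x' z'
    rw [← hqh]
    exact DSG.dualq_le_lagr f σ A yh ch x' z'
  -- the key pointwise lower bound on the Lagrangian at iteration k
  have hkey : ∀ (x' : X) (z' : H),
      (qh : EReal) + (δ : EReal) * σ z' ≤ lagr f σ A (y k) (c k) x' z' := by
    intro x' z'
    by_cases hσt : σ z' = ⊤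
    · have hnb : f x' z' - ((inner ℝ (A z') (y k) : ℝ) : EReal) ≠ ⊥ := by
        rw [sub_eq_add_neg, ← EReal.coe_neg, Ne, EReal.add_eq_bot_iff]
        push_neg
        exact ⟨hfbot x' z', EReal.coe_ne_bot _⟩
      unfold lagr
      rw [hσt, EReal.coe_mul_top_of_pos hδpos, EReal.add_top_of_ne_bot (EReal.coe_ne_bot qh),
        EReal.coe_mul_top_of_pos hCpos, EReal.add_top_of_ne_bot hnb]
    · have hσb : σ z' ≠ ⊥ := ((EReal.bot_lt_coe 0).trans_le (by
        rw [EReal.coe_zero]; exact hσpos z')).ne'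
      set v := (σ z').toReal with hvdef
      have hσv : σ z' = (v : EReal) := (EReal.coe_toReal hσt hσb).symm
      have hv0 : 0 ≤ v := by
        have := hσpos z'
        rw [hσv] at this
        exact_mod_cast this
      have hAzv : ‖A z'‖ ≤ v := by
        have := hA0 z'
        rw [hσv] at this
        exact_mod_cast this
      by_cases hft : f x' z' = ⊤
      · have htop : lagr f σ A (y k) (c k) x' z' = ⊤ := by
          unfold lagr
          rw [hft, hσv, EReal.top_sub_coe, ← EReal.coe_mul, EReal.top_add_coe]
        rw [htop]
        exact le_top
      · set rr := (f x' z').toReal with hrrdef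
        have hfr : f x' z' = (rr : EReal) := (EReal.coe_toReal hft (hfbot x' z')).symm
        have hq := hqle x' z'
        unfold lagr at hq ⊢
        rw [hfr, hσv] at hq ⊢
        have hq' : qh ≤ rr - (inner ℝ (A z') yh : ℝ) + ch * v := by exact_mod_cast hq
        have goal' : qh + δ * v ≤ rr - (inner ℝ (A z') (y k) : ℝ) + c k * v := by
          have hCS : |(inner ℝ (A z') (yh - y k) : ℝ)| ≤ ‖A z'‖ * ‖yh - y k‖ :=
            abs_real_inner_le_norm _ _
          have hsub : (inner ℝ (A z') yh : ℝ) - (inner ℝ (A z') (y k) : ℝ)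
              = (inner ℝ (A z') (yh - y k) : ℝ) := (inner_sub_right _ _ _).symm
          have hrev : ‖yh - y k‖ = ‖y k - yh‖ := norm_sub_rev _ _
          have hck : c k = ch + δ + ‖y k - yh‖ := by simp only [hδdef]; ring
          have habs := abs_le.1 hCS
          nlinarith [mul_le_mul_of_nonneg_right hAzv (norm_nonneg (yh - y k)),
            norm_nonneg (y k - yh), mul_nonneg hv0 (norm_nonneg (y k - yh))]
        exact_mod_cast goal'
  have hlow : ∀ (x' : X) (z' : H), (qh : EReal) ≤ lagr f σ A (y k) (c k) x' z' := by
    intro x' z'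
    refine le_trans (le_add_of_nonneg_right ?_) (hkey x' z')
    exact mul_nonneg (by exact_mod_cast hδpos.le) (hσpos z')
  have hdlow : (qh : EReal) ≤ dualq f σ A (y k) (c k) := DSG.le_dualq _ _ _ _ _ _ hlow
  have hdhigh : dualq f σ A (y k) (c k) ≤ (s : EReal) :=
    le_trans (hdualq_le _ _ xs) hφxs_le_s
  have hdbot : dualq f σ A (y k) (c k) ≠ ⊥ := ((EReal.bot_lt_coe qh).trans_le hdlow).ne'
  have hdtop : dualq f σ A (y k) (c k) ≠ ⊤ := (hdhigh.trans_lt (EReal.coe_lt_top s)).ne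
  refine ⟨⟨(dualq f σ A (y k) (c k)).toReal, (EReal.coe_toReal hdtop hdbot).symm⟩, ?_⟩
  -- now the attainment part
  -- facts about points in the sublevel set of the Lagrangian
  have hmem : ∀ (x' : X) (z' : H), lagr f σ A (y k) (c k) x' z' ≤ (s : EReal) →
      σ z' ≤ (Kσ : EReal) ∧ f x' z' ≤ ((s + Kσ * ‖y k‖ : ℝ) : EReal) := by
    intro x' z' hp
    have hk := le_trans (hkey x' z') hp
    have hσt : σ z' ≠ ⊤ := by
      intro h
      rw [h, EReal.coe_mul_top_of_pos hδpos, EReal.add_top_of_ne_bot (EReal.coe_ne_bot qh)]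
        at hk
      exact (EReal.coe_lt_top s).not_ge hk
    have hσb : σ z' ≠ ⊥ := ((EReal.bot_lt_coe 0).trans_le (by
      rw [EReal.coe_zero]; exact hσpos z')).ne'
    set v := (σ z').toReal with hvdef
    have hσv : σ z' = (v : EReal) := (EReal.coe_toReal hσt hσb).symm
    have hv0 : 0 ≤ v := by
      have := hσpos z'; rw [hσv] at this; exact_mod_cast this
    have hk' : qh + δ * v ≤ s := by
      rw [hσv] at hk; exact_mod_cast hk
    have hsq : s - qh < δ * Kσ := by
      have := (div_lt_iff₀ hKσpos).1 hδgt
      linarith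
    have hvK : v ≤ Kσ := by nlinarith
    refine ⟨by rw [hσv]; exact_mod_cast hvK, ?_⟩
    have hAzv : ‖A z'‖ ≤ v := by
      have := hA0 z'; rw [hσv] at this; exact_mod_cast this
    have hft : f x' z' ≠ ⊤ := by
      intro h
      unfold lagr at hp
      rw [h, hσv, EReal.top_sub_coe, ← EReal.coe_mul, EReal.top_add_coe] at hp
      exact (EReal.coe_lt_top s).not_ge hp
    set rr := (f x' z').toReal with hrrdef
    have hfr : f x' z' = (rr : EReal) := (EReal.coe_toReal hft (hfbot x' z')).symm
    unfold lagr at hp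
    rw [hfr, hσv] at hp
    have hp' : rr - (inner ℝ (A z') (y k) : ℝ) + c k * v ≤ s := by exact_mod_cast hp
    have hCS : |(inner ℝ (A z') (y k) : ℝ)| ≤ ‖A z'‖ * ‖y k‖ := abs_real_inner_le_norm _ _
    have habs := abs_le.1 hCS
    have hrr : rr ≤ s + Kσ * ‖y k‖ := by
      nlinarith [mul_le_mul_of_nonneg_right hAzv (norm_nonneg (y k)),
        mul_le_mul_of_nonneg_right hvK (norm_nonneg (y k)),
        mul_nonneg hCpos.le hv0]
    rw [hfr]; exact_mod_cast hrr
  -- the sublevel set S in the weak product topology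
  set L : WeakSpace ℝ X × WeakSpace ℝ H → EReal :=
    fun p => lagr f σ A (y k) (c k) p.1 p.2 with hLdef
  have hLlsc : LowerSemicontinuous L := by
    have hform : L = fun p => (f p.1 p.2 + ((-(inner ℝ (A p.2) (y k)) : ℝ) : EReal))
        + (c k : EReal) * σ p.2 := by
      funext p
      simp only [hLdef]
      unfold lagr
      rw [sub_eq_add_neg, ← EReal.coe_neg]
    rw [hform]
    have hGlsc : LowerSemicontinuous fun zz : WeakSpace ℝ H =>
        -(inner ℝ (A zz) (y k) : ℝ) := by
      intro w yv hyv
      have hyv' : yv < -(inner ℝ (A w) (y k) : ℝ) := hyv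
      have h1 : (inner ℝ (A w) (y k) : ℝ) < -yv := by linarith
      filter_upwards [hA1 (y k) w (-yv) h1] with zz hzz
      show yv < -(inner ℝ (A zz) (y k) : ℝ)
      have hzz' : (inner ℝ (A zz) (y k) : ℝ) < -yv := hzz
      linarith
    have hG2 : LowerSemicontinuous fun zz : WeakSpace ℝ H =>
        ((-(inner ℝ (A zz) (y k)) : ℝ) : EReal) :=
      continuous_coe_real_ereal.comp_lowerSemicontinuous hGlsc
        (fun _ _ h => EReal.coe_le_coe_iff.2 h)
    have hG3 : LowerSemicontinuous fun p : WeakSpace ℝ X × WeakSpace ℝ H =>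
        ((-(inner ℝ (A p.2) (y k)) : ℝ) : EReal) := by
      intro p
      exact (hG2 p.2).comp continuous_snd.continuousAt
    have hM : LowerSemicontinuous fun p : WeakSpace ℝ X × WeakSpace ℝ H =>
        (c k : EReal) * σ p.2 := by
      have hσ2 : LowerSemicontinuous fun zz : WeakSpace ℝ H => (c k : EReal) * σ zz :=
        DSG.lsc_const_mul hσwlsc hCpos.le
      intro p
      exact (hσ2 p.2).comp continuous_snd.continuousAt
    have h12 : LowerSemicontinuous fun p : WeakSpace ℝ X × WeakSpace ℝ H =>
        f p.1 p.2 + ((-(inner ℝ (A p.2) (y k)) : ℝ) : EReal) := by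
      apply hflsc.add' hG3
      intro p
      exact EReal.continuousAt_add (Or.inr (EReal.coe_ne_bot _)) (Or.inr (EReal.coe_ne_top _))
    apply h12.add' hM
    intro p
    refine EReal.continuousAt_add (Or.inr ?_) (Or.inl ?_)
    · exact ((EReal.bot_lt_coe 0).trans_le (by
        rw [EReal.coe_zero]
        exact mul_nonneg (by exact_mod_cast hCpos.le) (hσpos p.2))).ne'
    · rw [Ne, EReal.add_eq_bot_iff]
      push_neg
      exact ⟨hfbot p.1 p.2, EReal.coe_ne_bot _⟩
  set S : Set (WeakSpace ℝ X × WeakSpace ℝ H) := {p | L p ≤ (s : EReal)} with hSdef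
  have hS_closed : IsClosed S := hLlsc.isClosed_preimage (s : EReal)
  -- bounding sets
  set Z : Set H := {zz : H | σ zz ≤ (Kσ : EReal)} with hZdef
  obtain ⟨R₀, hR₀⟩ := hσcc.subset_closedBall 0
  set R : ℝ := max R₀ 0 with hRdef
  have hZR : Z ⊆ Metric.closedBall (0 : H) R :=
    hR₀.trans (Metric.closedBall_subset_closedBall (le_max_left _ _))
  have hBallC := DSG.wCompact_closedBall H R
  unfold WCompact at hBallC
  have hBallCl := DSG.wClosed_of_convex_closed (convex_closedBall (0 : H) R)
    Metric.isClosed_closedBall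
  set Cw : Set (WeakSpace ℝ H) := closure (show Set (WeakSpace ℝ H) from Z) with hCwdef
  have hCwcomp : IsCompact Cw :=
    hBallC.of_isClosed_subset isClosed_closure (closure_minimal hZR hBallCl)
  -- the covering compact set on the X side
  choose U hUo hUm B hBc hBp using fun z₀ : H => hflev z₀ (s + Kσ * ‖y k‖)
  have hcov : Cw ⊆ ⋃ ζ : H, (show Set (WeakSpace ℝ H) from U ζ) := by
    intro ζ _
    exact Set.mem_iUnion.2 ⟨ζ, hUm ζ⟩
  obtain ⟨t, ht⟩ := hCwcomp.elim_finite_subcover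
    (fun ζ : H => (show Set (WeakSpace ℝ H) from U ζ)) (fun ζ => hUo ζ) hcov
  set Bbig : Set X := ⋃ ζ ∈ t, B ζ with hBbigdef
  have hBbigC : IsCompact (show Set (WeakSpace ℝ X) from Bbig) :=
    t.isCompact_biUnion fun ζ _ => hBc ζ
  have hS_sub : S ⊆ (show Set (WeakSpace ℝ X) from Bbig) ×ˢ Cw := by
    rintro ⟨px, pz⟩ hp
    have hp' : lagr f σ A (y k) (c k) px pz ≤ (s : EReal) := hp
    obtain ⟨hσK, hfK⟩ := hmem px pz hp'
    have hzZ : pz ∈ (show Set (WeakSpace ℝ H) from Z) := hσK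
    have hzCw : pz ∈ Cw := subset_closure hzZ
    refine ⟨?_, hzCw⟩
    obtain ⟨ζ, hζt, hζU⟩ := Set.mem_iUnion₂.1 (ht hzCw)
    exact Set.mem_iUnion₂.2 ⟨ζ, hζt, hBp ζ pz hζU hfK⟩
  have hS_comp : IsCompact S :=
    (hBbigC.prod hCwcomp).of_isClosed_subset hS_closed hS_sub
  have hS_ne : S.Nonempty := by
    refine ⟨(xs, (0 : H)), ?_⟩
    show lagr f σ A (y k) (c k) xs 0 ≤ (s : EReal)
    rw [hlagr0]
    exact hφxs_le_s
  obtain ⟨pstar, hpS, hpmin⟩ := DSG.lsc_exists_min hS_comp hS_ne hLlsc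
  refine ⟨pstar.1, pstar.2, ?_⟩
  refine le_antisymm ?_ (DSG.dualq_le_lagr f σ A (y k) (c k) pstar.1 pstar.2)
  refine DSG.le_dualq f σ A (y k) (c k) _ ?_
  intro x' z'
  by_cases h : lagr f σ A (y k) (c k) x' z' ≤ (s : EReal)
  · exact hpmin (x', z') h
  · exact le_trans hpS (not_le.1 h).le
end
end
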